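/- The family L₁ does not belong to 1U; that is, no polynomial-size unambiguous family of 1nfa's over {0,1,#} solves L₁. -/

import Mathlib

/-! ## One-way nondeterministic finite automata -/

structure OneNFA (α : Type) : Type 1 where
  Q : Type
  [finQ : Fintype Q]
  start : Q
  next : Q → α → Set Q
  next_nonempty : ∀ q a, (next q a).Nonempty
  acc : Set Q

attribute [instance] OneNFA.finQ

namespace OneNFA

variable {α : Type}

/-- The state complexity (number of inner states). -/
def sc (M : OneNFA α) : ℕ := Fintype.card M.Q

/-- `p` is a computation path of `M` on input `x`. -/
def IsPath (M : OneNFA α) (x : List α) (p : Fin (x.length + 1) → M.Q) : Prop :=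
  p 0 = M.start ∧ ∀ i : Fin x.length, p i.succ ∈ M.next (p i.castSucc) (x.get i)

/-- `p` is an accepting computation path of `M` on input `x`. -/
def IsAccPath (M : OneNFA α) (x : List α) (p : Fin (x.length + 1) → M.Q) : Prop :=
  M.IsPath x p ∧ p (Fin.last x.length) ∈ M.acc

def Accepts (M : OneNFA α) (x : List α) : Prop := ∃ p, M.IsAccPath x p

/-- `M` is a 1dfa: every transition set is a singleton. -/
def Deterministic (M : OneNFA α) : Prop := ∀ q a, ∃ q', M.next q a = {q'}

end OneNFA

/-! ## Families of promise problems -/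

structure PromiseFamily (α : Type) where
  pos : ℕ → Set (List α)
  neg : ℕ → Set (List α)
  disj : ∀ n, Disjoint (pos n) (neg n)

namespace PromiseFamily

def valid {α : Type} (L : PromiseFamily α) (n : ℕ) : Set (List α) := L.pos n ∪ L.neg n

def co {α : Type} (L : PromiseFamily α) : PromiseFamily α :=
  ⟨L.neg, L.pos, fun n => (L.disj n).symm⟩

end PromiseFamily

/-- A family of promise problems over some finite alphabet. -/
structure Family : Type 1 where
  alph : Type
  [finA : Fintype alph]
  prob : PromiseFamily alph

attribute [instance] Family.finA

def Family.co (F : Family) : Family := { alph := F.alph, prob := F.prob.co }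

/-! ## One-way machine families -/

def Solves1 {α : Type} (M : ℕ → OneNFA α) (L : PromiseFamily α) : Prop :=
  ∀ n, (∀ x ∈ L.pos n, (M n).Accepts x) ∧ (∀ x ∈ L.neg n, ¬ (M n).Accepts x)

def PolySize1 {α : Type} (M : ℕ → OneNFA α) : Prop :=
  ∃ p : Polynomial ℕ, ∀ n, (M n).sc ≤ p.eval n

def Unambiguous1 {α : Type} (M : ℕ → OneNFA α) (L : PromiseFamily α) : Prop :=
  ∀ n, ∀ x ∈ L.valid n, {p | (M n).IsAccPath x p}.Subsingleton

def AcceptFew1 {α : Type} (M : ℕ → OneNFA α) (L : PromiseFamily α) : Prop :=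
  ∃ P : MvPolynomial (Fin 2) ℕ, ∀ n, ∀ x ∈ L.valid n,
    {p | (M n).IsAccPath x p}.ncard ≤ MvPolynomial.eval ![n, x.length] P

def WeaklyUnambiguous1 {α : Type} (M : ℕ → OneNFA α) (L : PromiseFamily α) : Prop :=
  ∀ n, ∀ x ∈ L.valid n, ∀ q : (M n).Q,
    {p | (M n).IsAccPath x p ∧ p (Fin.last x.length) = q}.Subsingleton

def ReachUnambiguous1 {α : Type} (M : ℕ → OneNFA α) (L : PromiseFamily α) : Prop :=
  ∀ n, ∀ x ∈ L.valid n, ∀ i ≤ x.length, ∀ q : (M n).Q,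
    {p : Fin ((x.take i).length + 1) → (M n).Q |
      (M n).IsPath (x.take i) p ∧ p (Fin.last (x.take i).length) = q}.Subsingleton

def ReachFew1 {α : Type} (M : ℕ → OneNFA α) (L : PromiseFamily α) : Prop :=
  ∃ P : MvPolynomial (Fin 2) ℕ, ∀ n, ∀ x ∈ L.valid n, ∀ i ≤ x.length, ∀ q : (M n).Q,
    {p : Fin ((x.take i).length + 1) → (M n).Q |
      (M n).IsPath (x.take i) p ∧ p (Fin.last (x.take i).length) = q}.ncard ≤
      MvPolynomial.eval ![n, x.length] P

/-! ## One-way nonuniform state complexity classes -/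

def oneN : Set Family :=
  {F | ∃ M : ℕ → OneNFA F.alph, PolySize1 M ∧ Solves1 M F.prob}

def oneD : Set Family :=
  {F | ∃ M : ℕ → OneNFA F.alph, PolySize1 M ∧ (∀ n, (M n).Deterministic) ∧ Solves1 M F.prob}

def oneU : Set Family :=
  {F | ∃ M : ℕ → OneNFA F.alph, PolySize1 M ∧ Unambiguous1 M F.prob ∧ Solves1 M F.prob}

def oneFew : Set Family :=
  {F | ∃ M : ℕ → OneNFA F.alph, PolySize1 M ∧ AcceptFew1 M F.prob ∧ Solves1 M F.prob}

def oneFewU : Set Family :=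
  {F | ∃ M : ℕ → OneNFA F.alph, PolySize1 M ∧ AcceptFew1 M F.prob ∧
        WeaklyUnambiguous1 M F.prob ∧ Solves1 M F.prob}

def oneReachU : Set Family :=
  {F | ∃ M : ℕ → OneNFA F.alph, PolySize1 M ∧ AcceptFew1 M F.prob ∧
        ReachUnambiguous1 M F.prob ∧ Solves1 M F.prob}

def oneReachFew : Set Family :=
  {F | ∃ M : ℕ → OneNFA F.alph, PolySize1 M ∧ AcceptFew1 M F.prob ∧
        ReachFew1 M F.prob ∧ Solves1 M F.prob}

def oneReachFewU : Set Family :=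
  {F | ∃ M : ℕ → OneNFA F.alph, PolySize1 M ∧ AcceptFew1 M F.prob ∧
        ReachFew1 M F.prob ∧ WeaklyUnambiguous1 M F.prob ∧ Solves1 M F.prob}

/-- The complement class `co-C`. -/
def coC (C : Set Family) : Set Family := {F | F.co ∈ C}
/-! ## Two-way nondeterministic finite automata -/

/-- A tape symbol: either an input symbol, the left endmarker `Sum.inr false`,
or the right endmarker `Sum.inr true`. -/
def TapeSym (α : Type) : Type := α ⊕ Bool

/-- The symbol held in cell `i` of the tape containing `▷x◁`. -/
def tapeAt {α : Type} (x : List α) (i : ℕ) : TapeSym α :=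
  if h0 : i = 0 then Sum.inr false
  else if h : i ≤ x.length then Sum.inl (x.get ⟨i - 1, by omega⟩)
  else Sum.inr true

structure TwoNFA (α : Type) : Type 1 where
  Q : Type
  [finQ : Fintype Q]
  start : Q
  acc : Set Q
  rej : Set Q
  acc_rej_disj : Disjoint acc rej
  next : Q → TapeSym α → Set (Q × ℤ)
  next_dir : ∀ q a t, t ∈ next q a → t.2 = -1 ∨ t.2 = 0 ∨ t.2 = 1

attribute [instance] TwoNFA.finQ

namespace TwoNFA

variable {α : Type}

def sc (M : TwoNFA α) : ℕ := Fintype.card M.Q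

def Halting (M : TwoNFA α) (q : M.Q) : Prop := q ∈ M.acc ∨ q ∈ M.rej

/-- Configuration `c` yields configuration `c'` in one step on input `x`. -/
def Yields (M : TwoNFA α) (x : List α) (c c' : M.Q × ℕ) : Prop :=
  ¬ M.Halting c.1 ∧ c.2 ≤ x.length + 1 ∧ c'.2 ≤ x.length + 1 ∧
    ∃ d : ℤ, (c'.1, d) ∈ M.next c.1 (tapeAt x c.2) ∧ (c'.2 : ℤ) = (c.2 : ℤ) + d

/-- A partial computation path of length `k` of `M` on `x`. -/
def IsPartialPath (M : TwoNFA α) (x : List α) (k : ℕ) (p : Fin (k + 1) → M.Q × ℕ) : Prop :=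
  p 0 = (M.start, 0) ∧ ∀ i : Fin k, M.Yields x (p i.castSucc) (p i.succ)

/-- A (full) computation path: the final configuration is the only halting one. -/
def IsCompPath (M : TwoNFA α) (x : List α) (k : ℕ) (p : Fin (k + 1) → M.Q × ℕ) : Prop :=
  M.IsPartialPath x k p ∧ ∀ i : Fin (k + 1), (M.Halting (p i).1 ↔ i = Fin.last k)

def IsAccPath (M : TwoNFA α) (x : List α) (k : ℕ) (p : Fin (k + 1) → M.Q × ℕ) : Prop :=
  M.IsCompPath x k p ∧ (p (Fin.last k)).1 ∈ M.acc

def Accepts (M : TwoNFA α) (x : List α) : Prop := ∃ k p, M.IsAccPath x k p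

def Deterministic (M : TwoNFA α) : Prop := ∀ q a, ∃ t, M.next q a = {t}

/-- The set of accepting computation paths of `M` on `x`. -/
def accPaths (M : TwoNFA α) (x : List α) : Set ((k : ℕ) × (Fin (k + 1) → M.Q × ℕ)) :=
  {kp | M.IsAccPath x kp.1 kp.2}

/-- The set of computation paths of `M` on `x` ending at configuration `conf`. -/
def compPathsTo (M : TwoNFA α) (x : List α) (conf : M.Q × ℕ) :
    Set ((k : ℕ) × (Fin (k + 1) → M.Q × ℕ)) :=
  {kp | M.IsCompPath x kp.1 kp.2 ∧ kp.2 (Fin.last kp.1) = conf}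

/-- The set of partial computation paths of `M` on `x` ending at configuration `conf`. -/
def partialPathsTo (M : TwoNFA α) (x : List α) (conf : M.Q × ℕ) :
    Set ((k : ℕ) × (Fin (k + 1) → M.Q × ℕ)) :=
  {kp | M.IsPartialPath x kp.1 kp.2 ∧ kp.2 (Fin.last kp.1) = conf}

end TwoNFA

/-! ## Two-way machine families -/

def Solves2 {α : Type} (M : ℕ → TwoNFA α) (L : PromiseFamily α) : Prop :=
  ∀ n, (∀ x ∈ L.pos n, (M n).Accepts x) ∧ (∀ x ∈ L.neg n, ¬ (M n).Accepts x)

def PolySize2 {α : Type} (M : ℕ → TwoNFA α) : Prop :=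
  ∃ p : Polynomial ℕ, ∀ n, (M n).sc ≤ p.eval n

def Unambiguous2 {α : Type} (M : ℕ → TwoNFA α) (L : PromiseFamily α) : Prop :=
  ∀ n, ∀ x ∈ L.valid n, ((M n).accPaths x).Subsingleton

def AcceptFew2 {α : Type} (M : ℕ → TwoNFA α) (L : PromiseFamily α) : Prop :=
  ∃ P : MvPolynomial (Fin 2) ℕ, ∀ n, ∀ x ∈ L.valid n,
    ((M n).accPaths x).encard ≤ (MvPolynomial.eval ![n, x.length] P : ℕ∞)

def WeaklyUnambiguous2 {α : Type} (M : ℕ → TwoNFA α) (L : PromiseFamily α) : Prop :=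
  ∀ n, ∀ x ∈ L.valid n, ∀ conf : (M n).Q × ℕ, conf.1 ∈ (M n).acc →
    ((M n).compPathsTo x conf).Subsingleton

def ReachUnambiguous2 {α : Type} (M : ℕ → TwoNFA α) (L : PromiseFamily α) : Prop :=
  ∀ n, ∀ x ∈ L.valid n, ∀ conf : (M n).Q × ℕ,
    ((M n).partialPathsTo x conf).Subsingleton

def ReachFew2 {α : Type} (M : ℕ → TwoNFA α) (L : PromiseFamily α) : Prop :=
  ∃ P : MvPolynomial (Fin 2) ℕ, ∀ n, ∀ x ∈ L.valid n, ∀ conf : (M n).Q × ℕ,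
    ((M n).partialPathsTo x conf).encard ≤ (MvPolynomial.eval ![n, x.length] P : ℕ∞)

/-! ## Two-way nonuniform state complexity classes -/

def twoN : Set Family :=
  {F | ∃ M : ℕ → TwoNFA F.alph, PolySize2 M ∧ Solves2 M F.prob}

def twoD : Set Family :=
  {F | ∃ M : ℕ → TwoNFA F.alph, PolySize2 M ∧ (∀ n, (M n).Deterministic) ∧ Solves2 M F.prob}

def twoU : Set Family :=
  {F | ∃ M : ℕ → TwoNFA F.alph, PolySize2 M ∧ Unambiguous2 M F.prob ∧ Solves2 M F.prob}

def twoFew : Set Family :=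
  {F | ∃ M : ℕ → TwoNFA F.alph, PolySize2 M ∧ AcceptFew2 M F.prob ∧ Solves2 M F.prob}

def twoFewU : Set Family :=
  {F | ∃ M : ℕ → TwoNFA F.alph, PolySize2 M ∧ AcceptFew2 M F.prob ∧
        WeaklyUnambiguous2 M F.prob ∧ Solves2 M F.prob}

def twoReachU : Set Family :=
  {F | ∃ M : ℕ → TwoNFA F.alph, PolySize2 M ∧ AcceptFew2 M F.prob ∧
        ReachUnambiguous2 M F.prob ∧ Solves2 M F.prob}

def twoReachFew : Set Family :=
  {F | ∃ M : ℕ → TwoNFA F.alph, PolySize2 M ∧ AcceptFew2 M F.prob ∧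
        ReachFew2 M F.prob ∧ Solves2 M F.prob}

def twoReachFewU : Set Family :=
  {F | ∃ M : ℕ → TwoNFA F.alph, PolySize2 M ∧ AcceptFew2 M F.prob ∧
        ReachFew2 M F.prob ∧ WeaklyUnambiguous2 M F.prob ∧ Solves2 M F.prob}

/-! ## Ceilings -/

/-- The family `F` has an `f(n)`-ceiling. -/
def HasCeiling (F : Family) (f : ℕ → ℕ) : Prop :=
  ∀ n, ∀ x ∈ F.prob.valid n, x.length ≤ f n

/-- The restriction `C/F` of a class `C` to families having an `f`-ceiling for some `f ∈ S`. -/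
def ceil (C : Set Family) (S : Set (ℕ → ℕ)) : Set Family :=
  {F | F ∈ C ∧ ∃ f ∈ S, HasCeiling F f}

def polyFuns : Set (ℕ → ℕ) := {f | ∃ p : Polynomial ℕ, ∀ n, f n = p.eval n}

/-- Super-exponential functions: `f(n) > 2^{p(n)}` for all but finitely many `n`,
for every polynomial `p`. -/
def supexpFuns : Set (ℕ → ℕ) :=
  {f | ∀ p : Polynomial ℕ, ∃ N, ∀ n ≥ N, 2 ^ p.eval n < f n}

/-- `F` has a logarithmic ceiling `ℓ(n) = a·log₂ n + b` with constants `a, b ≥ 0`. -/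
def HasLogCeiling (F : Family) : Prop :=
  ∃ a b : ℝ, 0 ≤ a ∧ 0 ≤ b ∧
    ∀ n, ∀ x ∈ F.prob.valid n, (x.length : ℝ) ≤ a * Real.logb 2 n + b

/-- The restriction `C/log` of a class `C` to families having logarithmic ceilings. -/
def ceilLog (C : Set Family) : Set Family := {F | F ∈ C ∧ HasLogCeiling F}
/-! ## The alphabet `{0, 1, #}` and encodings -/

inductive Sym3 : Type
  | zero | one | hash
deriving DecidableEq

instance : Fintype Sym3 :=
  ⟨{Sym3.zero, Sym3.one, Sym3.hash}, by intro x; cases x <;> simp⟩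

/-- The block `1^i 0^{m-i}`. -/
def block (m i : ℕ) : List Sym3 :=
  List.replicate i Sym3.one ++ List.replicate (m - i) Sym3.zero

lemma block_length {m i : ℕ} (h : i ≤ m) : (block m i).length = m := by
  simp [block]; omega

lemma block_count {m : ℕ} (i : ℕ) : (block m i).count Sym3.one = i := by
  simp [block, List.count_append, List.count_replicate]

lemma block_inj {m i j : ℕ} (h : block m i = block m j) : i = j := by
  have := block_count (m := m) i
  rw [h, block_count] at this
  omega

/-- The encoding `[[i₁,…,i_k]]_m` of a list of numbers. -/
def enc (m : ℕ) : List ℕ → List Sym3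
  | [] => []
  | [i] => block m i
  | i :: j :: rest => block m i ++ Sym3.zero :: enc m (j :: rest)

/-- Lists of length `k` with entries in `[n]`. -/
def ValidList (n k : ℕ) (l : List ℕ) : Prop :=
  l.length = k ∧ ∀ i ∈ l, 1 ≤ i ∧ i ≤ n

lemma enc_length {m : ℕ} :
    ∀ l : List ℕ, (∀ i ∈ l, i ≤ m) → (enc m l).length = l.length * (m + 1) - 1
  | [] => by simp [enc]
  | [i] => by
      intro h
      simp [enc, block_length (h i (by simp))]
  | i :: j :: rest => by
      intro h
      have ih := enc_length (j :: rest) (fun a ha => h a (List.mem_cons_of_mem _ ha))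
      have hb : (block m i).length = m := block_length (h i (List.mem_cons_self))
      show (block m i ++ Sym3.zero :: enc m (j :: rest)).length = _
      rw [List.length_append, hb, List.length_cons, ih]
      have hc : (i :: j :: rest).length = (j :: rest).length + 1 := by simp
      rw [hc]
      set L := (j :: rest).length with hLdef
      have hL : 1 ≤ L := by simp [hLdef]
      have h1 : (L + 1) * (m + 1) = L * (m + 1) + (m + 1) := by ring
      rw [h1]
      set P := L * (m + 1) with hPdef
      have hP : 1 ≤ P := by
        have := Nat.mul_le_mul hL (Nat.le_add_left 1 m)
        simpa [hPdef] using this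
      omega

lemma enc_ne_nil {m : ℕ} (i : ℕ) (rest : List ℕ) (hi : 1 ≤ i) :
    enc m (i :: rest) ≠ [] := by
  cases rest with
  | nil =>
      simp only [enc, block]
      intro h
      have := congrArg List.length h
      simp at this
      omega
  | cons j rest' =>
      simp only [enc]
      intro h
      have := congrArg List.length h
      simp at this

lemma enc_inj {m : ℕ} :
    ∀ u w : List ℕ, (∀ i ∈ u, 1 ≤ i ∧ i ≤ m) → (∀ i ∈ w, 1 ≤ i ∧ i ≤ m) →
      enc m u = enc m w → u = w
  | [], [], _, _, _ => rfl
  | [], j :: w', _, hw, h => by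
      exact absurd h.symm (enc_ne_nil j w' (hw j (by simp)).1)
  | i :: u', [], hu, _, h => by
      exact absurd h (enc_ne_nil i u' (hu i (by simp)).1)
  | [i], [j], hu, hw, h => by
      simp only [enc] at h
      rw [block_inj h]
  | [i], j :: b :: w', hu, hw, h => by
      exfalso
      have hl := congrArg List.length h
      rw [show enc m [i] = block m i from rfl,
        show enc m (j :: b :: w') = block m j ++ Sym3.zero :: enc m (b :: w') from rfl] at hl
      rw [List.length_append, List.length_cons,
        block_length (hu i (by simp)).2, block_length (hw j (by simp)).2] at hl
      omega
  | i :: a :: u', [j], hu, hw, h => by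
      exfalso
      have hl := congrArg List.length h
      rw [show enc m [j] = block m j from rfl,
        show enc m (i :: a :: u') = block m i ++ Sym3.zero :: enc m (a :: u') from rfl] at hl
      rw [List.length_append, List.length_cons,
        block_length (hu i (by simp)).2, block_length (hw j (by simp)).2] at hl
      omega
  | i :: a :: u', j :: b :: w', hu, hw, h => by
      rw [show enc m (i :: a :: u') = block m i ++ Sym3.zero :: enc m (a :: u') from rfl,
        show enc m (j :: b :: w') = block m j ++ Sym3.zero :: enc m (b :: w') from rfl] at h
      have hlen : (block m i).length = (block m j).length := by
        rw [block_length (hu i (by simp)).2, block_length (hw j (by simp)).2]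
      obtain ⟨h1, h2⟩ := List.append_inj h hlen
      have h3 : enc m (a :: u') = enc m (b :: w') := by
        simpa using h2
      have ih := enc_inj (a :: u') (b :: w')
        (fun x hx => hu x (List.mem_cons_of_mem _ hx))
        (fun x hx => hw x (List.mem_cons_of_mem _ hx)) h3
      rw [block_inj h1, ih]
/-! ## The promise problem family `L₁` -/

def L1pos (n : ℕ) : Set (List Sym3) :=
  {x | ∃ u v : List ℕ, ValidList n n u ∧ ValidList n n v ∧ u ≠ v ∧
        x = enc n u ++ Sym3.hash :: enc n v}

def L1neg (n : ℕ) : Set (List Sym3) :=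
  {x | ∃ u v : List ℕ, ValidList n n u ∧ ValidList n n v ∧ u = v ∧
        x = enc n u ++ Sym3.hash :: enc n v}

lemma L1_disj (n : ℕ) : Disjoint (L1pos n) (L1neg n) := by
  rw [Set.disjoint_left]
  rintro x ⟨u, v, hu, hv, huv, rfl⟩ ⟨u', v', hu', hv', huv', heq⟩
  have hlen : (enc n u).length = (enc n u').length := by
    rw [enc_length u (fun i hi => (hu.2 i hi).2),
      enc_length u' (fun i hi => (hu'.2 i hi).2), hu.1, hu'.1]
  obtain ⟨h1, h2⟩ := List.append_inj heq hlen
  have h2' : enc n v = enc n v' := by simpa using h2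
  have e1 : u = u' := enc_inj u u' hu.2 hu'.2 h1
  have e2 : v = v' := enc_inj v v' hv.2 hv'.2 h2'
  exact huv (by rw [e1, e2, huv'])

def L1prob : PromiseFamily Sym3 := ⟨L1pos, L1neg, L1_disj⟩

def L1fam : Family := { alph := Sym3, prob := L1prob }

/-! ## Matrices, their encodings, and the promise problem family `L₂` -/

/-- `R` represents an `n × n` matrix with entries in `[n]`, given as its list of rows. -/
def ValidMat (n : ℕ) (R : List (List ℕ)) : Prop :=
  R.length = n ∧ ∀ r ∈ R, ValidList n n r

/-- The encoding `[[D]]_n` of a matrix: its encoded rows joined by `#`. -/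
def encMat (n : ℕ) : List (List ℕ) → List Sym3
  | [] => []
  | [r] => enc n r
  | r :: s :: rest => enc n r ++ Sym3.hash :: encMat n (s :: rest)

lemma encMat_len {n : ℕ} :
    ∀ R : List (List ℕ), (∀ r ∈ R, ValidList n n r) →
      (encMat n R).length = R.length * (n * (n + 1) - 1 + 1) - 1
  | [] => by simp [encMat]
  | [r] => by
      intro h
      have hr := h r (by simp)
      have he : (enc n r).length = n * (n + 1) - 1 := by
        rw [enc_length r (fun i hi => (hr.2 i hi).2), hr.1]
      show (enc n r).length = ([r] : List (List ℕ)).length * (n * (n + 1) - 1 + 1) - 1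
      rw [he, show ([r] : List (List ℕ)).length = 1 from rfl]
      omega
  | r :: s :: rest => by
      intro h
      have ih := encMat_len (s :: rest) (fun a ha => h a (List.mem_cons_of_mem _ ha))
      have hr := h r (by simp)
      have he : (enc n r).length = n * (n + 1) - 1 := by
        rw [enc_length r (fun i hi => (hr.2 i hi).2), hr.1]
      show (enc n r ++ Sym3.hash :: encMat n (s :: rest)).length = _
      rw [List.length_append, he, List.length_cons, ih]
      have hc : (r :: s :: rest).length = (s :: rest).length + 1 := by simp
      rw [hc]
      set e := n * (n + 1) - 1 with hedef
      set L := (s :: rest).length with hLdef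
      have hL : 1 ≤ L := by simp [hLdef]
      have h1 : (L + 1) * (e + 1) = L * (e + 1) + (e + 1) := by ring
      rw [h1]
      set P := L * (e + 1) with hPdef
      have hP : 1 ≤ P := by
        calc 1 = 1 * 1 := by ring
        _ ≤ L * (e + 1) := Nat.mul_le_mul hL (by omega)
      omega

lemma encMat_inj {n : ℕ} :
    ∀ R W : List (List ℕ), (∀ r ∈ R, ValidList n n r) → (∀ r ∈ W, ValidList n n r) →
      R.length = W.length → encMat n R = encMat n W → R = W
  | [], [], _, _, _, _ => rfl
  | [], _ :: _, _, _, hl, _ => by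
      simp only [List.length_cons, List.length_nil] at hl
      omega
  | _ :: _, [], _, _, hl, _ => by
      simp only [List.length_cons, List.length_nil] at hl
      omega
  | [r], [w], hR, hW, _, h => by
      have := enc_inj r w (hR r (by simp)).2 (hW w (by simp)).2 h
      rw [this]
  | [r], w :: w' :: W', _, _, hl, _ => by
      simp only [List.length_cons, List.length_nil] at hl
      omega
  | r :: r' :: R', [w], _, _, hl, _ => by
      simp only [List.length_cons, List.length_nil] at hl
      omega
  | r :: r' :: R', w :: w' :: W', hR, hW, hl, h => by
      rw [show encMat n (r :: r' :: R') = enc n r ++ Sym3.hash :: encMat n (r' :: R') from rfl,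
        show encMat n (w :: w' :: W') = enc n w ++ Sym3.hash :: encMat n (w' :: W') from rfl] at h
      have hrlen : (enc n r).length = (enc n w).length := by
        have h1 := hR r (by simp); have h2 := hW w (by simp)
        rw [enc_length r (fun i hi => (h1.2 i hi).2),
          enc_length w (fun i hi => (h2.2 i hi).2), h1.1, h2.1]
      obtain ⟨h1, h2⟩ := List.append_inj h hrlen
      have h3 : encMat n (r' :: R') = encMat n (w' :: W') := by simpa using h2
      have ihr := enc_inj r w (hR r (by simp)).2 (hW w (by simp)).2 h1
      have ih := encMat_inj (r' :: R') (w' :: W')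
        (fun a ha => hR a (List.mem_cons_of_mem _ ha))
        (fun a ha => hW a (List.mem_cons_of_mem _ ha))
        (by simpa using hl) h3
      rw [ihr, ih]

/-- `SelSum R s` holds iff `s` is obtained by choosing one entry from each row of `R`
(the value `sum_D(σ)` for some choice function `σ`). -/
inductive SelSum : List (List ℕ) → ℕ → Prop
  | nil : SelSum [] 0
  | cons {a : ℕ} {r : List ℕ} {rest : List (List ℕ)} {s : ℕ} :
      a ∈ r → SelSum rest s → SelSum (r :: rest) (a + s)

def L2pos (n : ℕ) : Set (List Sym3) :=
  {x | ∃ R R' : List (List ℕ), ValidMat n R ∧ ValidMat n R' ∧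
        (∃ s : ℕ, SelSum R s ∧ SelSum R' s) ∧
        x = encMat n R ++ Sym3.hash :: Sym3.hash :: encMat n R'}

def L2neg (n : ℕ) : Set (List Sym3) :=
  {x | ∃ R R' : List (List ℕ), ValidMat n R ∧ ValidMat n R' ∧
        (∀ s s' : ℕ, SelSum R s → SelSum R' s' → s ≠ s') ∧
        x = encMat n R ++ Sym3.hash :: Sym3.hash :: encMat n R'}

lemma L2_disj (n : ℕ) : Disjoint (L2pos n) (L2neg n) := by
  rw [Set.disjoint_left]
  rintro x ⟨R, R', hR, hR', ⟨s, hs, hs'⟩, rfl⟩ ⟨W, W', hW, hW', hne, heq⟩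
  have hlen : (encMat n R).length = (encMat n W).length := by
    rw [encMat_len R hR.2, encMat_len W hW.2, hR.1, hW.1]
  obtain ⟨h1, h2⟩ := List.append_inj heq hlen
  have h2' : encMat n R' = encMat n W' := by simpa using h2
  have e1 : R = W := encMat_inj R W hR.2 hW.2 (by rw [hR.1, hW.1]) h1
  have e2 : R' = W' := encMat_inj R' W' hR'.2 hW'.2 (by rw [hR'.1, hW'.1]) h2'
  exact hne s s (e1 ▸ hs) (e2 ▸ hs') rfl

def L2prob : PromiseFamily Sym3 := ⟨L2pos, L2neg, L2_disj⟩

def L2fam : Family := { alph := Sym3, prob := L2prob }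
/-! ## One-way probabilistic finite automata data -/

/-- Product of the matrices of the symbols of a word. -/
noncomputable def wordMatrix {α Q : Type} [Fintype Q] [DecidableEq Q]
    (Mσ : TapeSym α → Matrix Q Q ℝ) (w : List (TapeSym α)) : Matrix Q Q ℝ :=
  (w.map Mσ).prod

/-- The tape word `▷ x ◁`. -/
def tapeWord {α : Type} (x : List α) : List (TapeSym α) :=
  Sum.inr false :: (x.map Sum.inl ++ [Sum.inr true])

/-- `p_{acc}(x : q)`: the `q`-entry of the row vector `ν · M_{▷x◁}`. -/
noncomputable def pacc {α Q : Type} [Fintype Q] [DecidableEq Q]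
    (ν : Q → ℝ) (Mσ : TapeSym α → Matrix Q Q ℝ) (x : List α) (q : Q) : ℝ :=
  Matrix.vecMul ν (wordMatrix Mσ (tapeWord x)) q
section PathCounting

open Finset

attribute [local instance] Classical.propDecidable

variable {α : Type} (M : OneNFA α)

/-- The finset of computation paths from `q` to `q'` reading `w`. -/
noncomputable def pathF (w : List α) (q q' : M.Q) : Finset (Fin (w.length + 1) → M.Q) :=
  Finset.univ.filter (fun p => p 0 = q ∧
    (∀ i : Fin w.length, p i.succ ∈ M.next (p i.castSucc) (w.get i)) ∧
    p (Fin.last w.length) = q')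

lemma pathF_nil (q q' : M.Q) :
    (pathF M [] q q').card = if q = q' then 1 else 0 := by
  have hlast : (Fin.last 0 : Fin 1) = 0 := rfl
  by_cases h : q = q'
  · subst h
    have : pathF M [] q q = {fun _ => q} := by
      ext p
      simp only [pathF, Finset.mem_filter, Finset.mem_univ, true_and, Finset.mem_singleton]
      constructor
      · rintro ⟨h0, -, -⟩
        funext i
        have hi : (i : ℕ) = 0 := by
          have := i.isLt; simp only [List.length_nil] at this; omega
        rw [show i = 0 from Fin.ext hi, h0]
      · rintro rfl
        exact ⟨rfl, fun i => i.elim0, rfl⟩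
    rw [this, if_pos rfl, Finset.card_singleton]
  · rw [if_neg h]
    rw [Finset.card_eq_zero]
    ext p
    simp only [pathF, Finset.mem_filter, Finset.mem_univ, true_and, Finset.notMem_empty,
      iff_false, not_and]
    intro h0 _ hl
    exact h (h0 ▸ hlast ▸ hl ▸ rfl)

lemma mem_pathF_cons_iff (a : α) (w : List α) (q q'' : M.Q)
    (p : Fin (w.length + 2) → M.Q) :
    p ∈ pathF M (a :: w) q q'' ↔
      p 0 = q ∧ p 1 ∈ M.next q a ∧ Fin.tail p ∈ pathF M w (p 1) q'' := by
  simp only [pathF, Finset.mem_filter, Finset.mem_univ, true_and]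
  constructor
  · rintro ⟨h0, hstep, hlast⟩
    refine ⟨h0, ?_, ?_, ?_, ?_⟩
    · have := hstep (0 : Fin (w.length + 1))
      simpa [h0] using this
    · simp [Fin.tail]
    · intro j
      have h := hstep (j.succ : Fin (w.length + 1))
      rw [← Fin.succ_castSucc] at h
      simpa [Fin.tail] using h
    · have h : Fin.tail p (Fin.last w.length) = p (Fin.last (w.length + 1)) := by
        simp [Fin.tail, Fin.succ_last]
      rw [h]; exact hlast
  · rintro ⟨h0, hr, ht0, hstep, hlast⟩
    refine ⟨h0, ?_, ?_⟩
    · intro i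
      induction i using Fin.cases with
      | zero =>
        have e1 : p (Fin.succ (0 : Fin (w.length + 1))) = p 1 := by
          rw [Fin.succ_zero_eq_one]
        have e2 : p (Fin.castSucc (0 : Fin (w.length + 1))) = q := by
          rw [Fin.castSucc_zero]; exact h0
        show p (Fin.succ (0 : Fin (w.length + 1))) ∈
          M.next (p (Fin.castSucc (0 : Fin (w.length + 1)))) a
        rw [e1, e2]; exact hr
      | succ j =>
        have h := hstep j
        simp only [Fin.tail] at h
        show p (Fin.succ j).succ ∈ M.next (p (Fin.succ j).castSucc) (w.get j)
        rw [← Fin.succ_castSucc]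
        exact h
    · have h := hlast
      simp only [Fin.tail, Fin.succ_last] at h
      exact h

lemma pathF_cons (a : α) (w : List α) (q q'' : M.Q) :
    (pathF M (a :: w) q q'').card =
      ∑ r : M.Q, if r ∈ M.next q a then (pathF M w r q'').card else 0 := by
  have key : (pathF M (a :: w) q q'').card =
      ((Finset.univ.filter (· ∈ M.next q a)).sigma fun r => pathF M w r q'').card := by
    refine Finset.card_bij'
      (fun p _ => (⟨p 1, Fin.tail p⟩ : Σ _ : M.Q, Fin (w.length+1) → M.Q))
      (fun rt _ => Fin.cons (α := fun _ : Fin (w.length + 2) => M.Q) q rt.2) ?hi ?hj ?li ?ri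
    case hi =>
      intro p hp
      rw [mem_pathF_cons_iff] at hp
      simp only [Finset.mem_sigma, Finset.mem_filter, Finset.mem_univ, true_and]
      exact ⟨hp.2.1, hp.2.2⟩
    case hj =>
      rintro ⟨r, t⟩ hrt
      simp only [Finset.mem_sigma, Finset.mem_filter, Finset.mem_univ, true_and] at hrt
      obtain ⟨hr, ht⟩ := hrt
      set pc : Fin (w.length + 2) → M.Q :=
        Fin.cons (α := fun _ : Fin (w.length + 2) => M.Q) q t with hpc
      have h1 : pc 1 = t 0 := by
        rw [← Fin.succ_zero_eq_one, hpc, Fin.cons_succ]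
      have ht00 : t 0 = r := by
        have := ht
        simp only [pathF, Finset.mem_filter, Finset.mem_univ, true_and] at this
        exact this.1
      show pc ∈ pathF M (a :: w) q q''
      rw [mem_pathF_cons_iff]
      refine ⟨Fin.cons_zero _ _, ?_, ?_⟩
      · rw [h1, ht00]; exact hr
      · rw [h1, ht00, hpc, Fin.tail_cons]; exact ht
    case li =>
      intro p hp
      rw [mem_pathF_cons_iff] at hp
      exact hp.1 ▸ Fin.cons_self_tail p
    case ri =>
      rintro ⟨r, t⟩ hrt
      simp only [Finset.mem_sigma, Finset.mem_filter, Finset.mem_univ, true_and] at hrt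
      set pc : Fin (w.length + 2) → M.Q :=
        Fin.cons (α := fun _ : Fin (w.length + 2) => M.Q) q t with hpc
      have ht00 : t 0 = r := by
        have := hrt.2
        simp only [pathF, Finset.mem_filter, Finset.mem_univ, true_and] at this
        exact this.1
      have h1 : pc 1 = r := by
        rw [← Fin.succ_zero_eq_one, hpc, Fin.cons_succ, ht00]
      obtain rfl : r = pc 1 := h1.symm
      show (⟨pc 1, Fin.tail pc⟩ : Σ _ : M.Q, Fin (w.length+1) → M.Q) = ⟨pc 1, t⟩
      rw [hpc, Fin.tail_cons]
  rw [key, Finset.card_sigma, Finset.sum_filter]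

lemma pathF_append (v : List α) (q'' : M.Q) :
    ∀ (u : List α) (q : M.Q), (pathF M (u ++ v) q q'').card =
      ∑ r : M.Q, (pathF M u q r).card * (pathF M v r q'').card
  | [], q => by
      simp only [List.nil_append, pathF_nil, ite_mul, one_mul, zero_mul]
      rw [Finset.sum_ite_eq]
      simp
  | a :: u, q => by
      show (pathF M (a :: (u ++ v)) q q'').card = _
      rw [pathF_cons]
      have h : ∀ r : M.Q, (if r ∈ M.next q a then (pathF M (u ++ v) r q'').card else 0) =
          ∑ s : M.Q, (if r ∈ M.next q a then (pathF M u r s).card else 0) *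
            (pathF M v s q'').card := by
        intro r
        by_cases h : r ∈ M.next q a
        · simp only [if_pos h]
          exact pathF_append v q'' u r
        · simp [if_neg h]
      rw [Finset.sum_congr rfl fun r _ => h r, Finset.sum_comm]
      refine Finset.sum_congr rfl fun s _ => ?_
      rw [← Finset.sum_mul, pathF_cons]

/-- Counting accepting paths by final state. -/
lemma accPath_card (x : List α) :
    (Finset.univ.filter fun p => M.IsAccPath x p).card =
      ∑ q' : M.Q, if q' ∈ M.acc then (pathF M x M.start q').card else 0 := by
  rw [Finset.card_eq_sum_card_fiberwise
    (f := fun p => p (Fin.last x.length)) (t := Finset.univ) (fun _ _ => Finset.mem_univ _)]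
  refine Finset.sum_congr rfl fun q' _ => ?_
  rw [Finset.filter_filter]
  by_cases h : q' ∈ M.acc
  · rw [if_pos h]
    congr 1
    refine Finset.ext fun p => ?_
    rw [Finset.mem_filter]
    simp only [OneNFA.IsAccPath, OneNFA.IsPath, pathF, Finset.mem_filter, Finset.mem_univ,
      true_and]
    constructor
    · rintro ⟨⟨⟨h0, hs⟩, _⟩, hl⟩; exact ⟨h0, hs, hl⟩
    · rintro ⟨h0, hs, hl⟩; exact ⟨⟨⟨h0, hs⟩, hl ▸ h⟩, hl⟩
  · rw [if_neg h]
    rw [Finset.card_eq_zero]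
    refine Finset.ext fun p => ?_
    rw [Finset.mem_filter]
    simp only [Finset.mem_filter, Finset.mem_univ, true_and, Finset.notMem_empty, iff_false,
      not_and, OneNFA.IsAccPath]
    rintro ⟨-, hacc⟩ hl
    exact h (hl ▸ hacc)

end PathCounting

section MainAux

lemma poly_upper (P : Polynomial ℕ) {n : ℕ} (hn : 1 ≤ n) :
    P.eval n ≤ (∑ i ∈ Finset.range (P.natDegree + 1), P.coeff i) * n ^ P.natDegree := by
  rw [Polynomial.eval_eq_sum_range, Finset.sum_mul]
  refine Finset.sum_le_sum fun i hi => ?_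
  exact Nat.mul_le_mul_left _
    (Nat.pow_le_pow_right hn (Nat.lt_succ_iff.mp (Finset.mem_range.mp hi)))

lemma rank_ne_matrix {W : Type} [Fintype W] [DecidableEq W] (h2 : 2 ≤ Fintype.card W) :
    (Matrix.of fun w w' : W => if w = w' then (0:ℚ) else 1).rank = Fintype.card W := by
  set N : ℚ := (Fintype.card W : ℚ) with hNdef
  have hN2 : (2:ℚ) ≤ N := by
    rw [hNdef]
    exact_mod_cast h2
  have hN : N - 1 ≠ 0 := by linarith
  set c : ℚ := (N - 1)⁻¹ with hcdef
  have hc1 : (N - 1) * c = 1 := mul_inv_cancel₀ hN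
  set A : Matrix W W ℚ := Matrix.of fun w w' => if w = w' then (0:ℚ) else 1 with hA
  set B : Matrix W W ℚ := Matrix.of fun w w' => if w = w' then c - 1 else c with hB
  have hAB : A * B = 1 := by
    ext i j
    rw [Matrix.mul_apply, Matrix.one_apply]
    have hterm : ∀ k : W, A i k * B k j =
        (c - (if k = j then (1:ℚ) else 0)) - (if i = k then c else 0)
          + (if i = k then (if k = j then (1:ℚ) else 0) else 0) := by
      intro k
      simp only [hA, hB, Matrix.of_apply]
      split_ifs <;> ring
    rw [Finset.sum_congr rfl fun k _ => hterm k]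
    rw [Finset.sum_add_distrib, Finset.sum_sub_distrib, Finset.sum_sub_distrib]
    rw [Finset.sum_ite_eq' Finset.univ j (fun _ => (1:ℚ)),
      Finset.sum_ite_eq Finset.univ i (fun _ => c),
      Finset.sum_ite_eq Finset.univ i (fun k => if k = j then (1:ℚ) else 0)]
    simp only [Finset.mem_univ, if_true, Finset.sum_const, Finset.card_univ, nsmul_eq_mul]
    have : N * c - 1 - c = 0 := by
      have h' : N * c - c = 1 := by linear_combination hc1
      linarith
    rw [← hNdef]
    by_cases hij : i = j <;> simp [hij] <;> linarith
  have : Invertible A := invertibleOfRightInverse A B hAB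
  exact Matrix.rank_of_isUnit A (isUnit_of_invertible A)

end MainAux

attribute [local instance] Classical.propDecidable in
/-- The family `L₁` does not belong to `1U`. -/
theorem L1_not_mem_oneU : L1fam ∉ oneU := by
  rintro ⟨M, ⟨P, hP⟩, hUn, hSol⟩
  -- choose n
  set C : ℕ := ∑ i ∈ Finset.range (P.natDegree + 1), P.coeff i with hC
  set D : ℕ := P.natDegree with hD
  set n : ℕ := max (C + 1) (D + 2) with hn
  have hn1 : 1 ≤ n := le_trans (by omega) (le_max_left _ _)
  have hn2 : 2 ≤ n := le_trans (by omega) (le_max_right _ _)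
  have hlt : P.eval n < n ^ n := by
    have h1 : P.eval n ≤ C * n ^ D := poly_upper P hn1
    have h2 : C < n := lt_of_lt_of_le (by omega) (le_max_left _ _)
    have h3 : C * n ^ D < n * n ^ D :=
      Nat.mul_lt_mul_of_lt_of_le h2 (le_refl _) (Nat.pow_pos (by omega))
    have h4 : n * n ^ D = n ^ (D + 1) := by ring
    have h5 : n ^ (D + 1) ≤ n ^ n :=
      Nat.pow_le_pow_right (by omega) (le_trans (by omega) (le_max_right _ _))
    omega
  -- the machine for n
  set A := M n with hAdef
  -- index words
  have hWcard : Fintype.card (Fin n → Fin n) = n ^ n := by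
    rw [Fintype.card_fun, Fintype.card_fin]
  set ℓ : (Fin n → Fin n) → List ℕ := fun w => List.ofFn fun i => (w i : ℕ) + 1 with hℓ
  have hValid : ∀ w, ValidList n n (ℓ w) := by
    intro w
    constructor
    · simp [hℓ]
    · intro i hi
      rw [hℓ, List.mem_ofFn] at hi
      obtain ⟨j, rfl⟩ := hi
      exact ⟨Nat.le_add_left _ _, (w j).isLt⟩
  have hℓinj : Function.Injective ℓ := by
    intro w w' h
    rw [hℓ] at h
    have h2 := List.ofFn_inj.mp h
    funext j
    have := congrFun h2 j
    simp only [Nat.add_right_cancel_iff] at this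
    exact Fin.ext this
  set x : (Fin n → Fin n) → (Fin n → Fin n) → List Sym3 :=
    fun w w' => enc n (ℓ w) ++ Sym3.hash :: enc n (ℓ w') with hx
  have hvalid : ∀ w w', x w w' ∈ L1prob.valid n := by
    intro w w'
    by_cases h : w = w'
    · subst h
      exact Or.inr ⟨ℓ w, ℓ w, hValid w, hValid w, rfl, rfl⟩
    · exact Or.inl ⟨ℓ w, ℓ w', hValid w, hValid w', fun he => h (hℓinj he), rfl⟩
  -- acceptance counts
  have hcount : ∀ w w',
      ((Finset.univ.filter fun p => A.IsAccPath (x w w') p).card : ℚ) =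
        if w = w' then (0:ℚ) else 1 := by
    intro w w'
    by_cases h : w = w'
    · subst h
      rw [if_pos rfl]
      have hrej : ¬ A.Accepts (x w w) :=
        (hSol n).2 (x w w) ⟨ℓ w, ℓ w, hValid w, hValid w, rfl, rfl⟩
      have : (Finset.univ.filter fun p => A.IsAccPath (x w w) p) = ∅ := by
        rw [Finset.eq_empty_iff_forall_notMem]
        intro p hp
        exact hrej ⟨p, (Finset.mem_filter.mp hp).2⟩
      rw [this]
      simp
    · rw [if_neg h]
      obtain ⟨p, hp⟩ := (hSol n).1 (x w w')
        ⟨ℓ w, ℓ w', hValid w, hValid w', fun he => h (hℓinj he), rfl⟩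
      have hsub := hUn n (x w w') (hvalid w w')
      have hle : (Finset.univ.filter fun p => A.IsAccPath (x w w') p).card ≤ 1 := by
        refine Finset.card_le_one.mpr fun a ha b hb => ?_
        exact hsub (Finset.mem_filter.mp ha).2 (Finset.mem_filter.mp hb).2
      have hge : 1 ≤ (Finset.univ.filter fun p => A.IsAccPath (x w w') p).card := by
        refine Finset.card_pos.mpr ⟨p, ?_⟩
        exact Finset.mem_filter.mpr ⟨Finset.mem_univ _, hp⟩
      have : (Finset.univ.filter fun p => A.IsAccPath (x w w') p).card = 1 := le_antisymm hle hge
      rw [this]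
      norm_num
  -- matrix factorization
  set Bm : Matrix (Fin n → Fin n) A.Q ℚ :=
    Matrix.of fun w q =>
      ((pathF A (enc n (ℓ w) ++ [Sym3.hash]) A.start q).card : ℚ) with hBm
  set Cm : Matrix A.Q (Fin n → Fin n) ℚ :=
    Matrix.of fun q w =>
      ((∑ q' : A.Q, if q' ∈ A.acc then (pathF A (enc n (ℓ w)) q q').card else 0 : ℕ) : ℚ)
      with hCm
  have hfact : (Matrix.of fun w w' : (Fin n → Fin n) => if w = w' then (0:ℚ) else 1)
      = Bm * Cm := by
    ext w w'
    rw [Matrix.of_apply, Matrix.mul_apply, ← hcount w w']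
    have hxsplit : x w w' = (enc n (ℓ w) ++ [Sym3.hash]) ++ enc n (ℓ w') := by
      rw [hx, List.append_assoc]
      rfl
    have hsplit : (Finset.univ.filter fun p => A.IsAccPath (x w w') p).card
        = ∑ q : A.Q, (pathF A (enc n (ℓ w) ++ [Sym3.hash]) A.start q).card *
            (∑ q' : A.Q, if q' ∈ A.acc then (pathF A (enc n (ℓ w')) q q').card else 0) := by
      rw [hxsplit]; refine (accPath_card A _).trans ?_
      have step1 : ∀ q' : A.Q,
          (if q' ∈ A.acc then
            (pathF A ((enc n (ℓ w) ++ [Sym3.hash]) ++ enc n (ℓ w')) A.start q').card else 0)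
          = ∑ q : A.Q, (pathF A (enc n (ℓ w) ++ [Sym3.hash]) A.start q).card *
              (if q' ∈ A.acc then (pathF A (enc n (ℓ w')) q q').card else 0) := by
        intro q'
        by_cases hq : q' ∈ A.acc
        · rw [if_pos hq]; refine (pathF_append A _ _ _ _).trans ?_
          exact Finset.sum_congr rfl fun q _ => by rw [if_pos hq]
        · simp [if_neg hq]
      rw [Finset.sum_congr rfl fun q' _ => step1 q', Finset.sum_comm]
      exact Finset.sum_congr rfl fun q _ => by rw [← Finset.mul_sum]
    rw [hsplit]
    push_cast
    refine Finset.sum_congr rfl fun q _ => ?_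
    show _ = ((pathF A (enc n (ℓ w) ++ [Sym3.hash]) A.start q).card : ℚ) *
      ((∑ q' : A.Q, if q' ∈ A.acc then (pathF A (enc n (ℓ w')) q q').card else 0 : ℕ) : ℚ)
    push_cast
    ring
  -- rank bounds
  have hrank : (Matrix.of fun w w' : (Fin n → Fin n) => if w = w' then (0:ℚ) else 1).rank
      = n ^ n := by
    rw [rank_ne_matrix (by rw [hWcard]; calc 2 ≤ 2 ^ 2 := by norm_num
          _ ≤ n ^ n := Nat.pow_le_pow_left hn2 n |>.trans' (Nat.pow_le_pow_right (by omega) hn2) ), hWcard]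
  have hrank2 : (Bm * Cm).rank ≤ Fintype.card A.Q :=
    le_trans (Matrix.rank_mul_le_left Bm Cm) (Matrix.rank_le_card_width Bm)
  have hcardQ : Fintype.card A.Q ≤ P.eval n := hP n
  rw [hfact] at hrank
  omega
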